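/- For every nonnegative integer n, sum over k from 0 to n of binomial(n,k) * x * F_k'(x) equals sum over k from 1 to n of binomial(n,k-1) * F_k(x), where F_n is the geometric polynomial and F_k' its derivative. -/

import Mathlib

open Finset Polynomial

/-- Stirling numbers of the second kind. -/
def S : ℕ → ℕ → ℕ
  | 0, 0 => 1
  | 0, _ + 1 => 0
  | _ + 1, 0 => 0
  | n + 1, k + 1 => (k + 1) * S n (k + 1) + S n k

/-- Geometric (Fubini) polynomials. -/
noncomputable def F (n : ℕ) : Polynomial ℤ :=
  ∑ k ∈ range (n + 1), Polynomial.C ((S n k : ℤ) * (Nat.factorial k : ℤ)) * Polynomial.X ^ k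

lemma S_eq_zero : ∀ n m, n < m → S n m = 0
  | 0, 0, h => absurd h (by omega)
  | 0, _ + 1, _ => rfl
  | _ + 1, 0, h => absurd h (by omega)
  | n + 1, m + 1, h => by
      rw [S, S_eq_zero n (m + 1) (by omega), S_eq_zero n m (by omega)]; ring

lemma coeff_F (n m : ℕ) : (F n).coeff m = (S n m : ℤ) * m.factorial := by
  rw [F, finset_sum_coeff]
  simp only [coeff_C_mul, coeff_X_pow, mul_ite, mul_one, mul_zero]
  rw [Finset.sum_ite_eq (range (n + 1)) m]
  split_ifs with h
  · rfl
  · rw [S_eq_zero n m (by simp at h; omega)]; simp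

lemma F_rec (n : ℕ) :
    F (n + 1) = X * F n + (X + X ^ 2) * derivative (F n) := by
  ext m
  have hd : ∀ j, (derivative (F n)).coeff j = (S n (j+1) : ℤ) * (j+1).factorial * (j+1) := by
    intro j; rw [coeff_derivative, coeff_F]
  rcases m with _ | m
  · simp [coeff_F, S, mul_comm, coeff_add, mul_coeff_zero]
  · rw [coeff_F, coeff_add, add_mul, coeff_add, coeff_X_mul]
    rcases m with _ | m
    · rw [coeff_F]
      have h1 : (X * derivative (F n)).coeff 1 = (derivative (F n)).coeff 0 := coeff_X_mul _ _
      have h2 : (X ^ 2 * derivative (F n)).coeff 1 = 0 := by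
        rw [pow_two, mul_assoc, coeff_X_mul, mul_comm, coeff_mul_X_zero]
      rw [h1, h2, hd 0]
      show ((1 * S n 1 + S n 0 : ℕ) : ℤ) * (Nat.factorial 1 : ℤ) = _
      push_cast [Nat.factorial]; ring
    · have h1 : (X * derivative (F n)).coeff (m + 2) = (derivative (F n)).coeff (m + 1) :=
        coeff_X_mul _ _
      have h2 : (X ^ 2 * derivative (F n)).coeff (m + 2) = (derivative (F n)).coeff m := by
        rw [pow_two, mul_assoc, coeff_X_mul, coeff_X_mul]
      rw [h1, h2, hd (m + 1), hd m, coeff_F]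
      show (((m + 2) * S n (m + 2) + S n (m + 1) : ℕ) : ℤ) * ((m + 2).factorial : ℤ) = _
      rw [Nat.factorial_succ (m + 1)]
      push_cast
      ring

noncomputable def A (n : ℕ) : Polynomial ℤ :=
  ∑ k ∈ range (n + 1), Polynomial.C (n.choose k : ℤ) * F k

lemma dA (n : ℕ) :
    derivative (A n) = ∑ k ∈ range (n + 1), Polynomial.C (n.choose k : ℤ) * derivative (F k) := by
  rw [A, derivative_sum]
  exact Finset.sum_congr rfl fun k _ => derivative_C_mul _ _

lemma sum_choose_F_succ (n : ℕ) :
    ∑ k ∈ range (n + 1), Polynomial.C (n.choose k : ℤ) * F (k + 1) =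
      X * A n + (X + X ^ 2) * derivative (A n) := by
  rw [dA, A, Finset.mul_sum, Finset.mul_sum, ← Finset.sum_add_distrib]
  refine Finset.sum_congr rfl fun k _ => ?_
  rw [F_rec]; ring

lemma A_succ (n : ℕ) :
    A (n + 1) = A n + X * A n + (X + X ^ 2) * derivative (A n) := by
  have h1 : A (n + 1) =
      (∑ i ∈ range (n + 1), Polynomial.C ((n + 1).choose (i + 1) : ℤ) * F (i + 1)) +
        Polynomial.C ((n + 1).choose 0 : ℤ) * F 0 := by
    rw [A, Finset.sum_range_succ']
  have h4 : ∑ i ∈ range (n + 1), Polynomial.C ((n + 1).choose (i + 1) : ℤ) * F (i + 1) =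
      (∑ i ∈ range (n + 1), Polynomial.C (n.choose i : ℤ) * F (i + 1)) +
        ∑ i ∈ range (n + 1), Polynomial.C (n.choose (i + 1) : ℤ) * F (i + 1) := by
    rw [← Finset.sum_add_distrib]
    refine Finset.sum_congr rfl fun i _ => ?_
    have : (((n + 1).choose (i + 1) : ℕ) : ℤ) = (n.choose i : ℤ) + (n.choose (i + 1) : ℤ) := by
      rw [Nat.choose_succ_succ]; push_cast; ring
    rw [this, map_add]; ring
  have h3 : A n = (∑ i ∈ range (n + 1), Polynomial.C (n.choose (i + 1) : ℤ) * F (i + 1)) +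
      Polynomial.C (n.choose 0 : ℤ) * F 0 := by
    have e : A n = ∑ k ∈ range (n + 2), Polynomial.C (n.choose k : ℤ) * F k := by
      rw [A, Finset.sum_range_succ _ (n + 1), Nat.choose_succ_self]; simp
    rw [e, Finset.sum_range_succ']
  rw [h1, h4, sum_choose_F_succ, h3]
  simp only [Nat.choose_zero_right]
  push_cast
  ring

lemma key : ∀ n : ℕ, X * A n = (1 + X) * F n - Polynomial.C (if n = 0 then (1 : ℤ) else 0)
  | 0 => by
      have hA : A 0 = F 0 := by simp [A]
      have hF : F 0 = 1 := by simp [F, S]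
      rw [hA, hF]; simp
  | n + 1 => by
      have ih := key n
      have h2 : X * derivative (A n) =
          F n + (1 + X) * derivative (F n) - A n := by
        have hder := congrArg derivative ih
        simp only [derivative_mul, derivative_X, derivative_sub, derivative_C, derivative_add,
          derivative_one, one_mul, mul_one, zero_mul, zero_add, sub_zero, add_zero] at hder
        linear_combination hder
      rw [A_succ, F_rec, if_neg (Nat.succ_ne_zero n), map_zero, sub_zero]
      linear_combination (X * (1 + X)) * h2

theorem stmt14 (n : ℕ) :
    ∑ k ∈ range (n + 1), Polynomial.C (n.choose k : ℤ) * Polynomial.X *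
        Polynomial.derivative (F k) =
      ∑ k ∈ Icc 1 n, Polynomial.C (n.choose (k - 1) : ℤ) * F k := by
  have h1 := key n
  have h2 : X * derivative (A n) = F n + (1 + X) * derivative (F n) - A n := by
    have hder := congrArg derivative h1
    simp only [derivative_mul, derivative_X, derivative_sub, derivative_C, derivative_add,
      derivative_one, one_mul, mul_one, zero_mul, zero_add, sub_zero, add_zero] at hder
    linear_combination hder
  have hL : ∑ k ∈ range (n + 1), Polynomial.C (n.choose k : ℤ) * Polynomial.X *
      Polynomial.derivative (F k) = X * derivative (A n) := by
    rw [dA, Finset.mul_sum]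
    exact Finset.sum_congr rfl fun k _ => by ring
  have hR : ∑ k ∈ Icc 1 n, Polynomial.C (n.choose (k - 1) : ℤ) * F k =
      X * A n + (X + X ^ 2) * derivative (A n) - F (n + 1) := by
    have hIcc : ∑ k ∈ Icc 1 n, Polynomial.C (n.choose (k - 1) : ℤ) * F k =
        ∑ i ∈ range n, Polynomial.C (n.choose i : ℤ) * F (i + 1) := by
      rw [← Finset.Ico_add_one_right_eq_Icc, Finset.sum_Ico_eq_sum_range]
      refine Finset.sum_congr (by norm_num) fun i _ => ?_
      rw [show 1 + i - 1 = i from by omega, show 1 + i = i + 1 from by omega]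
    have hfull := sum_choose_F_succ n
    rw [Finset.sum_range_succ, Nat.choose_self] at hfull
    rw [hIcc]
    push_cast at hfull
    rw [map_one, one_mul] at hfull
    linear_combination hfull
  rw [hL, hR, F_rec]
  linear_combination (-X) * h2
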